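/- Let M be an invertible (k+1)×(k+1) real matrix with all column sums equal to 1, J the (k+1)×k matrix with first row −𝟙 and remaining rows I_k, Ξ the k×k matrix Ξ_{i,j} = M_{i+1,j+1} − M_{i+1,1}, and let D be a (k+1)×(k+1) matrix with column sums all 0 and p a column vector of length k+1. Write d ∈ ℝᵏ for the last k coordinates of D·p. Then M⁻¹·D·p = J·Ξ⁻¹·d. -/
import Mathlib


open Matrix

private def Jmat (k : ℕ) : Matrix (Fin (k+1)) (Fin k) ℝ :=
  fun i j => if i = j.succ then 1 else if i = 0 then -1 else 0

private def contrast {k : ℕ} (A : Matrix (Fin (k+1)) (Fin (k+1)) ℝ) :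
    Matrix (Fin k) (Fin k) ℝ :=
  fun i j => A i.succ j.succ - A i.succ 0

private lemma sum_succ_eq {k : ℕ} (A : Matrix (Fin (k+1)) (Fin (k+1)) ℝ)
    (hA : ∀ j, ∑ i, A i j = 1) (c : Fin (k+1)) :
    ∑ l : Fin k, A l.succ c = 1 - A 0 c := by
  have := hA c
  rw [Fin.sum_univ_succ] at this
  linarith

private lemma mul_Jmat {k : ℕ} (A : Matrix (Fin (k+1)) (Fin (k+1)) ℝ)
    (hA : ∀ j, ∑ i, A i j = 1) :
    A * Jmat k = Jmat k * contrast A := by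
  ext i j
  simp only [Matrix.mul_apply, Jmat, contrast]
  rw [Fin.sum_univ_succ]
  rcases Fin.eq_zero_or_eq_succ i with hi | ⟨m, hm⟩
  · subst hi
    have h1 : ∀ l : Fin k, A 0 l.succ * (if l.succ = j.succ then (1:ℝ) else if l.succ = 0 then -1 else 0)
        = if l = j then A 0 j.succ else 0 := by
      intro l
      by_cases hl : l = j <;> simp [hl, Fin.succ_inj, Fin.succ_ne_zero]
    have h2 : ∀ l : Fin k, (if (0:Fin (k+1)) = l.succ then (1:ℝ) else if (0:Fin (k+1)) = 0 then -1 else 0) * (A l.succ j.succ - A l.succ 0)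
        = -(A l.succ j.succ - A l.succ 0) := by
      intro l
      simp [(Fin.succ_ne_zero l).symm]
    rw [Finset.sum_congr rfl (fun l _ => h1 l), Finset.sum_congr rfl (fun l _ => h2 l)]
    rw [Finset.sum_ite_eq' Finset.univ j (fun _ => A 0 j.succ),
      Finset.sum_neg_distrib, Finset.sum_sub_distrib,
      sum_succ_eq A hA j.succ, sum_succ_eq A hA 0]
    simp [(Fin.succ_ne_zero j).symm]
    ring
  · subst hm
    have hne : (m.succ : Fin (k+1)) ≠ 0 := Fin.succ_ne_zero m
    have h1 : ∀ l : Fin k, A m.succ l.succ * (if l.succ = j.succ then (1:ℝ) else if l.succ = 0 then -1 else 0)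
        = if l = j then A m.succ j.succ else 0 := by
      intro l
      by_cases hl : l = j <;> simp [hl, Fin.succ_inj, Fin.succ_ne_zero]
    have h2 : ∀ l : Fin k, (if (m.succ : Fin (k+1)) = l.succ then (1:ℝ) else if (m.succ:Fin (k+1)) = 0 then -1 else 0) * (A l.succ j.succ - A l.succ 0)
        = if l = m then A m.succ j.succ - A m.succ 0 else 0 := by
      intro l
      by_cases hl : l = m
      · simp [hl]
      · simp [hl, Fin.succ_inj, hne, Ne.symm hl]
    rw [Finset.sum_congr rfl (fun l _ => h1 l), Finset.sum_congr rfl (fun l _ => h2 l)]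
    rw [Finset.sum_ite_eq' Finset.univ j (fun _ => A m.succ j.succ),
      Finset.sum_ite_eq' Finset.univ m (fun _ => A m.succ j.succ - A m.succ 0)]
    simp [hne, (Fin.succ_ne_zero j).symm]
    ring

private lemma Jmat_cancel {k : ℕ} (X Y : Matrix (Fin k) (Fin k) ℝ)
    (h : Jmat k * X = Jmat k * Y) : X = Y := by
  ext i j
  have hthis := congrFun (congrFun h i.succ) j
  simp only [Matrix.mul_apply, Jmat] at hthis
  have key : ∀ Z : Matrix (Fin k) (Fin k) ℝ,
      ∑ l : Fin k, (if (i.succ : Fin (k+1)) = l.succ then (1:ℝ) else if (i.succ : Fin (k+1)) = 0 then -1 else 0) * Z l j = Z i j := by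
    intro Z
    have h1 : ∀ l : Fin k, (if (i.succ : Fin (k+1)) = l.succ then (1:ℝ) else if (i.succ : Fin (k+1)) = 0 then -1 else 0) * Z l j = if l = i then Z i j else 0 := by
      intro l
      by_cases hl : l = i
      · simp [hl]
      · simp [hl, Fin.succ_inj, Fin.succ_ne_zero, Ne.symm hl]
    rw [Finset.sum_congr rfl (fun l _ => h1 l),
      Finset.sum_ite_eq' Finset.univ i (fun _ => Z i j)]
    simp
  rw [key X, key Y] at hthis
  exact hthis

private lemma Jmat_mulVec {k : ℕ} (x : Fin k → ℝ) :
    (Jmat k).mulVec x = fun i =>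
      if h : i = 0 then -∑ j, x j else x (i.pred h) := by
  funext i
  simp only [Matrix.mulVec, dotProduct, Jmat]
  rcases Fin.eq_zero_or_eq_succ i with hi | ⟨m, hm⟩
  · subst hi
    rw [dif_pos rfl]
    have h1 : ∀ l : Fin k, (if (0:Fin (k+1)) = l.succ then (1:ℝ) else if (0:Fin (k+1)) = 0 then -1 else 0) * x l = -(x l) := by
      intro l
      simp [(Fin.succ_ne_zero l).symm]
    rw [Finset.sum_congr rfl (fun l _ => h1 l)]
    simp
  · subst hm
    have hne : (m.succ : Fin (k+1)) ≠ 0 := Fin.succ_ne_zero m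
    rw [dif_neg hne]
    have h1 : ∀ l : Fin k, (if (m.succ : Fin (k+1)) = l.succ then (1:ℝ) else if (m.succ:Fin (k+1)) = 0 then -1 else 0) * x l = if l = m then x m else 0 := by
      intro l
      by_cases hl : l = m
      · simp [hl]
      · simp [hl, Fin.succ_inj, hne, Ne.symm hl]
    rw [Finset.sum_congr rfl (fun l _ => h1 l),
      Finset.sum_ite_eq' Finset.univ m (fun _ => x m)]
    simp

theorem key_matrix_identity {k : ℕ} (M D : Matrix (Fin (k+1)) (Fin (k+1)) ℝ)
    (hM : IsUnit M.det)
    (hMcol : ∀ j, ∑ i, M i j = 1)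
    (hDcol : ∀ j, ∑ i, D i j = 0)
    (p : Fin (k+1) → ℝ)
    (J : Matrix (Fin (k+1)) (Fin k) ℝ)
    (hJ : ∀ i j, J i j = if i = j.succ then 1 else if i = 0 then -1 else 0)
    (Ξ : Matrix (Fin k) (Fin k) ℝ)
    (hΞ : ∀ i j, Ξ i j = M i.succ j.succ - M i.succ 0)
    (d : Fin k → ℝ)
    (hd : ∀ j, d j = (D.mulVec p) j.succ) :
    M⁻¹.mulVec (D.mulVec p) = J.mulVec (Ξ⁻¹.mulVec d) := by
  have hJeq : J = Jmat k := by ext i j; rw [hJ]; rfl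
  have hΞeq : Ξ = contrast M := by ext i j; rw [hΞ]; rfl
  subst hJeq hΞeq
  set N := M⁻¹ with hN
  have hMN : M * N = 1 := Matrix.mul_nonsing_inv M hM
  have hNM : N * M = 1 := Matrix.nonsing_inv_mul M hM
  have hNcol : ∀ j, ∑ i, N i j = 1 := by
    intro j
    have h1 : ∀ i, ∑ l, M i l * N l j = (1 : Matrix (Fin (k+1)) (Fin (k+1)) ℝ) i j := by
      intro i
      have := congrFun (congrFun hMN i) j
      simpa [Matrix.mul_apply] using this
    have h2 : ∑ i, ∑ l, M i l * N l j = 1 := by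
      rw [Finset.sum_congr rfl (fun i _ => h1 i)]
      simp [Matrix.one_apply]
    rw [Finset.sum_comm] at h2
    calc ∑ i, N i j = ∑ l, (∑ i, M i l) * N l j := by
          simp [hMcol]
      _ = 1 := by
          rw [← h2]
          congr 1; ext l; rw [Finset.sum_mul]
  have hMJ : M * Jmat k = Jmat k * contrast M := mul_Jmat M hMcol
  have hNJ : N * Jmat k = Jmat k * contrast N := mul_Jmat N hNcol
  have hleft : contrast N * contrast M = 1 := by
    apply Jmat_cancel
    rw [Matrix.mul_one]
    calc Jmat k * (contrast N * contrast M)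
        = (Jmat k * contrast N) * contrast M := by rw [Matrix.mul_assoc]
      _ = N * (Jmat k * contrast M) := by rw [← hNJ, Matrix.mul_assoc]
      _ = N * (M * Jmat k) := by rw [hMJ]
      _ = Jmat k := by rw [← Matrix.mul_assoc, hNM, Matrix.one_mul]
  have hΞinv : (contrast M)⁻¹ = contrast N := Matrix.inv_eq_left_inv hleft
  have hsum : ∑ i, (D.mulVec p) i = 0 := by
    simp only [Matrix.mulVec, dotProduct]
    rw [Finset.sum_comm]
    calc ∑ j, ∑ i, D i j * p j = ∑ j, (∑ i, D i j) * p j := by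
          congr 1; ext j; rw [Finset.sum_mul]
      _ = 0 := by simp [hDcol]
  have hDp : D.mulVec p = (Jmat k).mulVec d := by
    rw [Jmat_mulVec]
    funext i
    rcases Fin.eq_zero_or_eq_succ i with hi | ⟨m, hm⟩
    · subst hi
      rw [dif_pos rfl]
      have h0 := hsum
      rw [Fin.sum_univ_succ] at h0
      have hsd : ∑ j : Fin k, d j = ∑ j : Fin k, (D.mulVec p) j.succ :=
        Finset.sum_congr rfl (fun j _ => hd j)
      rw [hsd]
      linarith
    · subst hm
      rw [dif_neg (Fin.succ_ne_zero m)]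
      simp [hd m]
  rw [hDp]
  show N *ᵥ (Jmat k *ᵥ d) = _
  rw [Matrix.mulVec_mulVec, hNJ, ← Matrix.mulVec_mulVec, hΞinv]
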